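/- Let B, C, D be random vectors and W the Moore–Penrose inverse of Var(D). Then the adjusted covariance can be computed with only one residual: Cov_D(B,C) = Cov(B, C − E_D(C)). -/

import Mathlib

open MeasureTheory Matrix

variable {Ω : Type*}

/-- The covariance matrix of two random vectors `B` (dimension `m`) and `D` (dimension `n`):
the `(i,j)` entry is `E[Bᵢ·Dⱼ] − E[Bᵢ]·E[Dⱼ]`. -/
noncomputable def cov [MeasurableSpace Ω] (μ : Measure Ω) {m n : ℕ}
    (B : Fin m → Ω → ℝ) (D : Fin n → Ω → ℝ) : Matrix (Fin m) (Fin n) ℝ :=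
  Matrix.of fun i j =>
    (∫ ω, B i ω * D j ω ∂μ) - (∫ ω, B i ω ∂μ) * (∫ ω, D j ω ∂μ)

/-- `W` is a Moore–Penrose inverse of `V`. -/
def IsMoorePenrose {m n : ℕ} (V : Matrix (Fin m) (Fin n) ℝ)
    (W : Matrix (Fin n) (Fin m) ℝ) : Prop :=
  V * W * V = V ∧ W * V * W = W ∧ (V * W)ᵀ = V * W ∧ (W * V)ᵀ = W * V

/-- The adjusted expectation `E_D(B)` (computed with the matrix `W`, intended to be the
Moore–Penrose inverse of `Var(D)`): the `i`-th component is
`E[Bᵢ] + Σ_j (Cov(B,D)·W)_{ij}·(Dⱼ − E[Dⱼ])`. -/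
noncomputable def adjExp [MeasurableSpace Ω] (μ : Measure Ω) {m n : ℕ}
    (B : Fin m → Ω → ℝ) (D : Fin n → Ω → ℝ)
    (W : Matrix (Fin n) (Fin n) ℝ) : Fin m → Ω → ℝ :=
  fun i ω => (∫ ω', B i ω' ∂μ) + ∑ j, (cov μ B D * W) i j * (D j ω - ∫ ω', D j ω' ∂μ)

/-- The adjusted covariance `Cov_D(B,C) = Cov(B − E_D(B), C − E_D(C))`. -/
noncomputable def adjCov [MeasurableSpace Ω] (μ : Measure Ω) {m p n : ℕ}
    (B : Fin m → Ω → ℝ) (C : Fin p → Ω → ℝ) (D : Fin n → Ω → ℝ)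
    (W : Matrix (Fin n) (Fin n) ℝ) : Matrix (Fin m) (Fin p) ℝ :=
  cov μ (fun i ω => B i ω - adjExp μ B D W i ω) (fun j ω => C j ω - adjExp μ C D W j ω)

section Aux

variable [MeasurableSpace Ω] {μ : Measure Ω}

lemma integrable_mul2 {f g : Ω → ℝ} (hf : MemLp f 2 μ) (hg : MemLp g 2 μ) :
    Integrable (fun ω => f ω * g ω) μ := by
  have h : MemLp (f • g) 1 μ := hg.smul hf (hpqr := ⟨by
    rw [inv_one, ENNReal.inv_two_add_inv_two]⟩)
  exact memLp_one_iff_integrable.mp h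

lemma integrable2 [IsProbabilityMeasure μ] {f : Ω → ℝ} (hf : MemLp f 2 μ) :
    Integrable f μ := hf.integrable (by norm_num)

/-- scalar covariance -/
noncomputable def scov (μ : Measure Ω) (f g : Ω → ℝ) : ℝ :=
  (∫ ω, f ω * g ω ∂μ) - (∫ ω, f ω ∂μ) * (∫ ω, g ω ∂μ)

lemma scov_comm (f g : Ω → ℝ) : scov μ f g = scov μ g f := by
  simp [scov, mul_comm]

lemma cov_apply {m n : ℕ} (X : Fin m → Ω → ℝ) (Y : Fin n → Ω → ℝ) (i : Fin m) (j : Fin n) :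
    cov μ X Y i j = scov μ (X i) (Y j) := rfl

lemma memℒp_combo {r : ℕ} {Y : Ω → ℝ} (hY : MemLp Y 2 μ)
    {g : Fin r → Ω → ℝ} (hg : ∀ l, MemLp (g l) 2 μ) (c b : ℝ) (a : Fin r → ℝ)
    [IsFiniteMeasure μ] :
    MemLp (fun ω => c + b * Y ω + ∑ l, a l * g l ω) 2 μ := by
  exact ((memLp_const c).add (hY.const_mul b)).add
    (memLp_finset_sum _ fun l _ => (hg l).const_mul (a l))

lemma scov_combo [IsProbabilityMeasure μ] {r : ℕ} (X Y : Ω → ℝ)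
    (hX : MemLp X 2 μ) (hY : MemLp Y 2 μ)
    (g : Fin r → Ω → ℝ) (hg : ∀ l, MemLp (g l) 2 μ) (c b : ℝ) (a : Fin r → ℝ) :
    scov μ X (fun ω => c + b * Y ω + ∑ l, a l * g l ω)
      = b * scov μ X Y + ∑ l, a l * scov μ X (g l) := by
  have hXg : ∀ l : Fin r, Integrable (fun ω => a l * (X ω * g l ω)) μ :=
    fun l => (integrable_mul2 hX (hg l)).const_mul (a l)
  have iA : Integrable (fun ω => c * X ω + b * (X ω * Y ω)) μ := by
    exact ((integrable2 hX).const_mul c).add ((integrable_mul2 hX hY).const_mul b)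
  have iS : Integrable (fun ω => ∑ l, a l * (X ω * g l ω)) μ :=
    integrable_finset_sum _ fun l _ => hXg l
  have iB : Integrable (fun ω => c + b * Y ω) μ := by
    exact (integrable_const c).add ((integrable2 hY).const_mul b)
  have iT : Integrable (fun ω => ∑ l, a l * g l ω) μ :=
    integrable_finset_sum _ fun l _ => (integrable2 (hg l)).const_mul (a l)
  have h1 : (∫ ω, X ω * (c + b * Y ω + ∑ l, a l * g l ω) ∂μ)
      = c * (∫ ω, X ω ∂μ) + b * (∫ ω, X ω * Y ω ∂μ)
        + ∑ l, a l * (∫ ω, X ω * g l ω ∂μ) := by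
    have e : (fun ω => X ω * (c + b * Y ω + ∑ l, a l * g l ω))
        = fun ω => (c * X ω + b * (X ω * Y ω)) + ∑ l, a l * (X ω * g l ω) := by
      funext ω
      rw [mul_add, mul_add, Finset.mul_sum]
      congr 1
      · ring
      · exact Finset.sum_congr rfl fun l _ => by ring
    rw [e, integral_add iA iS,
      integral_add (((integrable2 hX).const_mul c)) ((integrable_mul2 hX hY).const_mul b),
      integral_const_mul, integral_const_mul, integral_finset_sum _ fun l _ => hXg l]
    congr 1
    exact Finset.sum_congr rfl fun l _ => integral_const_mul _ _
  have h2 : (∫ ω, (c + b * Y ω + ∑ l, a l * g l ω) ∂μ)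
      = c + b * (∫ ω, Y ω ∂μ) + ∑ l, a l * (∫ ω, g l ω ∂μ) := by
    rw [integral_add iB iT,
      integral_add (integrable_const c) ((integrable2 hY).const_mul b),
      integral_const_mul, integral_const,
      integral_finset_sum _ fun l _ => (integrable2 (hg l)).const_mul (a l)]
    simp only [measure_univ, probReal_univ, ENNReal.toReal_one, smul_eq_mul, one_mul]
    congr 1
    exact Finset.sum_congr rfl fun l _ => integral_const_mul (a l) _
  simp only [scov]
  rw [h1, h2, mul_add, mul_add, Finset.mul_sum]
  simp only [mul_sub]
  rw [Finset.sum_sub_distrib,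
    show (∑ l, (∫ ω, X ω ∂μ) * (a l * ∫ ω, g l ω ∂μ))
        = ∑ l, a l * ((∫ ω, X ω ∂μ) * ∫ ω, g l ω ∂μ)
      from Finset.sum_congr rfl fun l _ => by ring,
    show (∑ l, a l * ((∫ ω, X ω ∂μ) * ∫ ω, g l ω ∂μ))
        = ∑ l, a l * ((∫ ω, X ω ∂μ) * ∫ ω, g l ω ∂μ) from rfl]
  ring

lemma scov_sum [IsProbabilityMeasure μ] {r : ℕ} (X : Ω → ℝ) (hX : MemLp X 2 μ)
    (g : Fin r → Ω → ℝ) (hg : ∀ l, MemLp (g l) 2 μ) (a : Fin r → ℝ) :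
    scov μ X (fun ω => ∑ l, a l * g l ω) = ∑ l, a l * scov μ X (g l) := by
  have h := scov_combo X X hX hX g hg 0 0 a
  simpa using h

lemma scov_eq_zero_of_self [IsProbabilityMeasure μ] {X Y : Ω → ℝ}
    (hX : MemLp X 2 μ) (hY : MemLp Y 2 μ) (h : scov μ Y Y = 0) :
    scov μ X Y = 0 := by
  set c := ∫ ω, Y ω ∂μ with hc
  have iYY : Integrable (fun ω => Y ω * Y ω) μ := integrable_mul2 hY hY
  have iA : Integrable (fun ω => Y ω * Y ω + (-(2 * c)) * Y ω) μ := by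
    exact iYY.add ((integrable2 hY).const_mul _)
  have hvar : (∫ ω, (Y ω - c) ^ 2 ∂μ) = scov μ Y Y := by
    have e : (fun ω => (Y ω - c) ^ 2)
        = fun ω => (Y ω * Y ω + (-(2 * c)) * Y ω) + c ^ 2 := by
      funext ω; ring
    rw [e, integral_add iA (integrable_const _),
      integral_add iYY ((integrable2 hY).const_mul _),
      integral_const_mul, integral_const]
    simp only [measure_univ, probReal_univ, ENNReal.toReal_one, smul_eq_mul, one_mul, scov, ← hc]
    ring
  have h0 : (∫ ω, (Y ω - c) ^ 2 ∂μ) = 0 := by rw [hvar, h]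
  have hint : Integrable (fun ω => (Y ω - c) ^ 2) μ := (hY.sub (memLp_const c)).integrable_sq
  have hae : (fun ω => (Y ω - c) ^ 2) =ᵐ[μ] 0 :=
    (integral_eq_zero_iff_of_nonneg (fun ω => sq_nonneg _) hint).mp h0
  have hYc : Y =ᵐ[μ] fun _ => c := by
    filter_upwards [hae] with ω hω
    have h2 := pow_eq_zero_iff (n := 2) (by norm_num) |>.mp hω
    linarith [sub_eq_zero.mp h2]
  have hXY : (∫ ω, X ω * Y ω ∂μ) = c * ∫ ω, X ω ∂μ := by
    rw [show (∫ ω, X ω * Y ω ∂μ) = ∫ ω, c * X ω ∂μ from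
      integral_congr_ae (by filter_upwards [hYc] with ω hω; rw [hω]; ring),
      integral_const_mul]
  simp only [scov, hXY, ← hc]
  ring

end Aux

/-- the adjusted covariance can be computed with only one residual:
`Cov_D(B,C) = Cov(B, C − E_D(C))`, where `W` is the Moore–Penrose inverse of `Var(D)`. -/
theorem adjCov_eq_cov_one_residual [MeasurableSpace Ω] (μ : Measure Ω)
    [IsProbabilityMeasure μ] {m p n : ℕ}
    (B : Fin m → Ω → ℝ) (C : Fin p → Ω → ℝ) (D : Fin n → Ω → ℝ)
    (hB : ∀ i, Measurable (B i) ∧ MemLp (B i) 2 μ)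
    (hC : ∀ i, Measurable (C i) ∧ MemLp (C i) 2 μ)
    (hD : ∀ i, Measurable (D i) ∧ MemLp (D i) 2 μ)
    (W : Matrix (Fin n) (Fin n) ℝ) (hW : IsMoorePenrose (cov μ D D) W) :
    adjCov μ B C D W = cov μ B (fun j ω => C j ω - adjExp μ C D W j ω) := by
  obtain ⟨hW1, -, -, -⟩ := hW
  set V := cov μ D D with hVdef
  set M := (1 : Matrix (Fin n) (Fin n) ℝ) - W * V with hMdef
  have hVM : V * M = 0 := by
    rw [hMdef, Matrix.mul_sub, Matrix.mul_one, ← Matrix.mul_assoc, hW1, sub_self]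
  have hYmem : ∀ k : Fin n, MemLp (fun ω => ∑ l, M l k * D l ω) 2 μ :=
    fun k => memLp_finset_sum _ fun l _ => ((hD l).2).const_mul _
  have hsymV : ∀ k l, V k l = V l k := fun k l => scov_comm (D k) (D l)
  -- variance of the "null direction" combinations is zero
  have hYY : ∀ k : Fin n, scov μ (fun ω => ∑ l, M l k * D l ω)
      (fun ω => ∑ l, M l k * D l ω) = 0 := by
    intro k
    rw [scov_sum _ (hYmem k) D (fun l => (hD l).2) _]
    have e : ∀ l : Fin n, scov μ (fun ω => ∑ r, M r k * D r ω) (D l)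
        = (V * M) l k := by
      intro l
      rw [scov_comm, scov_sum _ ((hD l).2) D (fun l => (hD l).2) _, Matrix.mul_apply]
      exact Finset.sum_congr rfl fun r _ => by rw [mul_comm]; rfl
    rw [Finset.sum_congr rfl fun l _ => by rw [e l]]
    simp [hVM]
  -- any L² r.v. has zero scov against such combinations
  have hXY0 : ∀ (X : Ω → ℝ), MemLp X 2 μ → ∀ k : Fin n,
      scov μ X (fun ω => ∑ l, M l k * D l ω) = 0 :=
    fun X hX k => scov_eq_zero_of_self hX (hYmem k) (hYY k)
  -- cov(C,D) * M = 0
  have hcM : cov μ C D * M = 0 := by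
    ext j k
    rw [Matrix.mul_apply, Matrix.zero_apply]
    have h0 := hXY0 (C j) (hC j).2 k
    rw [scov_sum _ ((hC j).2) D (fun l => (hD l).2) _] at h0
    rw [← h0]
    exact Finset.sum_congr rfl fun l _ => by rw [mul_comm]; rfl
  have hQV : cov μ C D * (W * V) = cov μ C D := by
    have h := hcM
    rw [hMdef, Matrix.mul_sub, Matrix.mul_one, sub_eq_zero] at h
    exact h.symm
  set Q := cov μ C D * W with hQdef
  -- residual of C against D has zero covariance with D
  have hDres : ∀ (k : Fin n) (j : Fin p),
      scov μ (D k) (fun ω => C j ω - adjExp μ C D W j ω) = 0 := by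
    intro k j
    have efun : (fun ω => C j ω - adjExp μ C D W j ω)
        = fun ω => (-(∫ ω', C j ω' ∂μ) + ∑ l, Q j l * (∫ ω', D l ω' ∂μ))
            + 1 * C j ω + ∑ l, (-(Q j l)) * D l ω := by
      funext ω
      simp only [adjExp, ← hQdef]
      rw [show (∑ l, Q j l * (D l ω - ∫ ω', D l ω' ∂μ))
          = (∑ l, Q j l * D l ω) - ∑ l, Q j l * (∫ ω', D l ω' ∂μ) from by
        rw [← Finset.sum_sub_distrib]
        exact Finset.sum_congr rfl fun l _ => by ring]
      rw [show (∑ l, -(Q j l) * D l ω) = -∑ l, Q j l * D l ω from by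
        simp only [neg_mul]
        exact Finset.sum_neg_distrib _]
      ring
    rw [efun, scov_combo (D k) (C j) (hD k).2 (hC j).2 D (fun l => (hD l).2) _ _ _]
    have e2 : ∀ l, scov μ (D k) (D l) = V k l := fun l => rfl
    have e3 : scov μ (D k) (C j) = cov μ C D j k := scov_comm (D k) (C j)
    rw [e3, Finset.sum_congr rfl fun l _ => by rw [e2 l]]
    have e4 : (∑ l, -(Q j l) * V k l) = -((Q * V) j k) := by
      rw [Matrix.mul_apply, ← Finset.sum_neg_distrib]
      exact Finset.sum_congr rfl fun l _ => by rw [hsymV k l]; ring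
    rw [e4, hQdef, Matrix.mul_assoc, hQV]
    ring
  -- now conclude
  ext i j
  set P := cov μ B D * W with hPdef
  have efunB : (fun ω => B i ω - adjExp μ B D W i ω)
      = fun ω => (-(∫ ω', B i ω' ∂μ) + ∑ k, P i k * (∫ ω', D k ω' ∂μ))
          + 1 * B i ω + ∑ k, (-(P i k)) * D k ω := by
    funext ω
    simp only [adjExp, ← hPdef]
    rw [show (∑ k, P i k * (D k ω - ∫ ω', D k ω' ∂μ))
        = (∑ k, P i k * D k ω) - ∑ k, P i k * (∫ ω', D k ω' ∂μ) from by
      rw [← Finset.sum_sub_distrib]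
      exact Finset.sum_congr rfl fun k _ => by ring]
    rw [show (∑ k, -(P i k) * D k ω) = -∑ k, P i k * D k ω from by
      simp only [neg_mul]
      exact Finset.sum_neg_distrib _]
    ring
  have hmemresid : MemLp (fun ω => C j ω - adjExp μ C D W j ω) 2 μ := by
    have efun : (fun ω => C j ω - adjExp μ C D W j ω)
        = fun ω => (-(∫ ω', C j ω' ∂μ) + ∑ l, Q j l * (∫ ω', D l ω' ∂μ))
            + 1 * C j ω + ∑ l, (-(Q j l)) * D l ω := by
      funext ω
      simp only [adjExp, ← hQdef]
      rw [show (∑ l, Q j l * (D l ω - ∫ ω', D l ω' ∂μ))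
          = (∑ l, Q j l * D l ω) - ∑ l, Q j l * (∫ ω', D l ω' ∂μ) from by
        rw [← Finset.sum_sub_distrib]
        exact Finset.sum_congr rfl fun l _ => by ring]
      rw [show (∑ l, -(Q j l) * D l ω) = -∑ l, Q j l * D l ω from by
        simp only [neg_mul]
        exact Finset.sum_neg_distrib _]
      ring
    rw [efun]
    exact memℒp_combo (hC j).2 (fun l => (hD l).2) _ _ _
  show scov μ (fun ω => B i ω - adjExp μ B D W i ω)
      (fun ω => C j ω - adjExp μ C D W j ω)
    = scov μ (B i) (fun ω => C j ω - adjExp μ C D W j ω)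
  rw [scov_comm, efunB,
    scov_combo _ (B i) hmemresid (hB i).2 D (fun l => (hD l).2) _ _ _]
  rw [Finset.sum_congr rfl fun k _ => by
    rw [scov_comm (fun ω => C j ω - adjExp μ C D W j ω) (D k), hDres k j, mul_zero]]
  rw [Finset.sum_const, smul_zero, add_zero, one_mul,
    scov_comm (fun ω => C j ω - adjExp μ C D W j ω) (B i)]
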